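/- Orthogonal projection marginal likelihood factorization: under the model Y = A Z + E with AᵀA = I_d and A_c an n₁×(n₁−d) matrix whose columns complete A to an orthonormal basis of ℝ^{n₁}, the marginal density of Y (after integrating out Z) factors as p(Y) = ∏_{l=1}^{d} 𝒩(Yᵀa_l; 0, Σ_l + σ₀²I_{n₂}) · ∏_{l=1}^{n₁−d} 𝒩(Yᵀa_{c,l}; 0, σ₀²I_{n₂}). -/

import Mathlib

open Matrix MeasureTheory

/-- Multivariate normal density with mean 0 and covariance S, evaluated at x. -/
noncomputable def mvnPdf {n : ℕ} (S : Matrix (Fin n) (Fin n) ℝ) (x : Fin n → ℝ) : ℝ :=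
  (Real.sqrt ((2 * Real.pi) ^ n * S.det))⁻¹ * Real.exp (-(x ⬝ᵥ S⁻¹ *ᵥ x) / 2)

/-- Univariate normal density with mean 0 and variance q, evaluated at x. -/
noncomputable def gpdf (q x : ℝ) : ℝ :=
  (Real.sqrt (2 * Real.pi * q))⁻¹ * Real.exp (-(x ^ 2) / (2 * q))

/-- Joint density of (Z, Y) under the model Y = A Z + E: the rows Z_l are independent
N(0, Σ_l) and the entries of E = Y - A Z are i.i.d. N(0, σ₀²). -/
noncomputable def jointPdfLMC {n₁ d n₂ : ℕ} (A : Matrix (Fin n₁) (Fin d) ℝ)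
    (S : Fin d → Matrix (Fin n₂) (Fin n₂) ℝ) (σ02 : ℝ)
    (Z : Matrix (Fin d) (Fin n₂) ℝ) (Y : Matrix (Fin n₁) (Fin n₂) ℝ) : ℝ :=
  (∏ l : Fin d, mvnPdf (S l) (Z l)) * ∏ i : Fin n₁, ∏ j : Fin n₂, gpdf σ02 ((Y - A * Z) i j)


lemma sqrt_pow_nat {x : ℝ} (hx : 0 ≤ x) (n : ℕ) : Real.sqrt (x ^ n) = Real.sqrt x ^ n := by
  induction n with
  | zero => simp
  | succ k ih => rw [pow_succ, pow_succ, Real.sqrt_mul (by positivity), ih]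

lemma smul_one_posDef {n : ℕ} {c : ℝ} (hc : 0 < c) :
    (c • (1 : Matrix (Fin n) (Fin n) ℝ)).PosDef := by
  have : c • (1 : Matrix (Fin n) (Fin n) ℝ) = Matrix.diagonal (fun _ => c) := by
    ext i j
    simp [Matrix.one_apply, Matrix.diagonal_apply, Matrix.smul_apply, mul_ite]
  rw [this]
  exact Matrix.posDef_diagonal_iff.mpr fun _ => hc

lemma smul_one_inv {n : ℕ} {c : ℝ} (hc : c ≠ 0) :
    (c • (1 : Matrix (Fin n) (Fin n) ℝ))⁻¹ = c⁻¹ • (1 : Matrix (Fin n) (Fin n) ℝ) := by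
  apply Matrix.inv_eq_right_inv
  rw [Matrix.smul_mul, Matrix.mul_smul, one_mul, smul_smul, mul_inv_cancel₀ hc, one_smul]

lemma smul_one_det {n : ℕ} (c : ℝ) :
    (c • (1 : Matrix (Fin n) (Fin n) ℝ)).det = c ^ n := by
  rw [Matrix.det_smul, Matrix.det_one, mul_one, Fintype.card_fin]

lemma dot_sym {n : ℕ} {M : Matrix (Fin n) (Fin n) ℝ} (hM : Mᵀ = M) (a b : Fin n → ℝ) :
    a ⬝ᵥ M *ᵥ b = b ⬝ᵥ M *ᵥ a := by
  rw [Matrix.dotProduct_mulVec]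
  nth_rewrite 1 [← hM]
  rw [Matrix.vecMul_transpose, dotProduct_comm]

open scoped MatrixOrder in
lemma gauss_integral {n : ℕ} {Q : Matrix (Fin n) (Fin n) ℝ} (hQ : Q.PosDef) :
    ∫ x : Fin n → ℝ, Real.exp (-(x ⬝ᵥ Q *ᵥ x) / 2)
      = Real.sqrt ((2 * Real.pi) ^ n / Q.det) := by
  classical
  have hpsd := hQ.posSemidef
  set B := CFC.sqrt Q with hBdef
  have hBB : B * B = Q := CFC.sqrt_mul_sqrt_self Q hpsd.nonneg
  have hBsym : Bᵀ = B := by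
    have h := (CFC.sqrt_nonneg Q).posSemidef.isHermitian
    rwa [Matrix.IsHermitian, Matrix.conjTranspose_eq_transpose_of_trivial] at h
  have hdetQ : 0 < Q.det := hQ.det_pos
  have hBnn : 0 ≤ B.det := by
    rw [(CFC.sqrt_nonneg Q).posSemidef.isHermitian.det_eq_prod_eigenvalues]
    exact Finset.prod_nonneg fun i _ => (CFC.sqrt_nonneg Q).posSemidef.eigenvalues_nonneg i
  have hdetB2 : B.det * B.det = Q.det := by rw [← Matrix.det_mul, hBB]
  have hdetB : B.det = Real.sqrt Q.det := by
    rw [← hdetB2, Real.sqrt_mul_self hBnn]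
  have hdetB0 : B.det ≠ 0 := by
    rw [hdetB]; positivity
  -- quadratic form as squared norm
  have hquad : ∀ x : Fin n → ℝ, x ⬝ᵥ Q *ᵥ x = (B *ᵥ x) ⬝ᵥ (B *ᵥ x) := by
    intro x
    rw [← hBB, ← Matrix.mulVec_mulVec, Matrix.dotProduct_mulVec]
    nth_rewrite 1 [← hBsym]
    rw [Matrix.vecMul_transpose]
  -- change of variables
  have hmap : Measure.map (Matrix.toLin' B) volume
      = ENNReal.ofReal |(B.det)⁻¹| • volume := by
    have : LinearMap.det (Matrix.toLin' B) ≠ 0 := by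
      rwa [LinearMap.det_toLin']
    rw [Real.map_linearMap_volume_pi_eq_smul_volume_pi this, LinearMap.det_toLin']
  have hcont : Continuous fun u : Fin n → ℝ => Real.exp (-(u ⬝ᵥ u) / 2) := by
    apply Real.continuous_exp.comp
    apply Continuous.div_const
    apply Continuous.neg
    exact continuous_finset_sum _ fun i _ => ((continuous_apply i).mul (continuous_apply i))
  calc ∫ x : Fin n → ℝ, Real.exp (-(x ⬝ᵥ Q *ᵥ x) / 2)
      = ∫ x : Fin n → ℝ, Real.exp (-((Matrix.toLin' B x) ⬝ᵥ (Matrix.toLin' B x)) / 2) := by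
        simp_rw [Matrix.toLin'_apply, ← hquad]
    _ = ∫ u : Fin n → ℝ, Real.exp (-(u ⬝ᵥ u) / 2) ∂(Measure.map (Matrix.toLin' B) volume) := by
        rw [integral_map (Measurable.aemeasurable (Matrix.toLin' B).continuous_of_finiteDimensional.measurable)
          hcont.aestronglyMeasurable]
    _ = |B.det⁻¹| * ∫ u : Fin n → ℝ, Real.exp (-(u ⬝ᵥ u) / 2) := by
        rw [hmap, integral_smul_measure, ENNReal.toReal_ofReal (abs_nonneg _), smul_eq_mul]
    _ = B.det⁻¹ * Real.sqrt (2 * Real.pi) ^ n := by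
        congr 1
        · rw [abs_of_nonneg (inv_nonneg.mpr hBnn)]
        · have : ∀ u : Fin n → ℝ, Real.exp (-(u ⬝ᵥ u) / 2) = ∏ j, Real.exp (-(u j ^ 2) / 2) := by
            intro u
            rw [← Real.exp_sum]
            congr 1
            rw [dotProduct, neg_div, Finset.sum_div, ← Finset.sum_neg_distrib]
            exact Finset.sum_congr rfl fun j _ => by ring
          simp_rw [this]
          rw [MeasureTheory.integral_fintype_prod_volume_eq_pow (ι := Fin n) (fun t : ℝ => Real.exp (-(t ^ 2) / 2)), Fintype.card_fin]
          congr 1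
          have : ∀ t : ℝ, Real.exp (-(t ^ 2) / 2) = Real.exp (-(1/2 : ℝ) * t ^ 2) := by
            intro t; congr 1; ring
          simp_rw [this]
          rw [integral_gaussian]
          rw [show Real.pi / (1/2 : ℝ) = 2 * Real.pi by ring]
    _ = Real.sqrt ((2 * Real.pi) ^ n / Q.det) := by
        rw [hdetB, ← Real.sqrt_inv, ← sqrt_pow_nat (by positivity), ← Real.sqrt_mul (by positivity),
          div_eq_mul_inv, mul_comm]

lemma mvnPdf_smul_one {n : ℕ} {c : ℝ} (hc : 0 < c) (x : Fin n → ℝ) :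
    mvnPdf (c • (1 : Matrix (Fin n) (Fin n) ℝ)) x = ∏ j, gpdf c (x j) := by
  unfold mvnPdf gpdf
  rw [Finset.prod_mul_distrib, Finset.prod_const, ← Real.exp_sum, Finset.card_univ,
    Fintype.card_fin, smul_one_inv hc.ne', smul_one_det]
  congr 1
  · rw [← mul_pow, ← Real.sqrt_inv, ← Real.sqrt_inv, ← inv_pow, sqrt_pow_nat (by positivity)]
  · congr 1
    have hx : x ⬝ᵥ (c⁻¹ • (1 : Matrix (Fin n) (Fin n) ℝ)) *ᵥ x = c⁻¹ * ∑ j, x j ^ 2 := by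
      rw [Matrix.smul_mulVec, Matrix.one_mulVec, dotProduct_smul, smul_eq_mul]
      congr 1
      rw [dotProduct]
      exact Finset.sum_congr rfl fun j _ => (sq (x j)).symm
    rw [hx, ← Finset.sum_div, Finset.sum_neg_distrib]
    rw [neg_div, neg_div, neg_inj, inv_mul_eq_div, div_div, mul_comm c 2]

lemma conv_lemma {n : ℕ} {S : Matrix (Fin n) (Fin n) ℝ} (hS : S.PosDef) {c : ℝ} (hc : 0 < c)
    (w : Fin n → ℝ) :
    (∫ z : Fin n → ℝ, mvnPdf S z * mvnPdf (c • (1 : Matrix (Fin n) (Fin n) ℝ)) (w - z))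
      = mvnPdf (S + c • (1 : Matrix (Fin n) (Fin n) ℝ)) w := by
  classical
  have hSdet : 0 < S.det := hS.det_pos
  have hSS : S * S⁻¹ = 1 := Matrix.mul_nonsing_inv S hSdet.ne'.isUnit
  have hSinv : S⁻¹.PosDef := hS.inv
  have hcI : (c⁻¹ • (1 : Matrix (Fin n) (Fin n) ℝ)).PosDef := smul_one_posDef (by positivity)
  set Q : Matrix (Fin n) (Fin n) ℝ := S⁻¹ + c⁻¹ • 1 with hQdef
  have hQ : Q.PosDef := hSinv.add hcI
  have hQdet : 0 < Q.det := hQ.det_pos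
  have hQQ : Q * Q⁻¹ = 1 := Matrix.mul_nonsing_inv Q hQdet.ne'.isUnit
  have hQQ' : Q⁻¹ * Q = 1 := Matrix.nonsing_inv_mul Q hQdet.ne'.isUnit
  have hQsym : Qᵀ = Q := by
    have h := hQ.isHermitian
    rwa [Matrix.IsHermitian, Matrix.conjTranspose_eq_transpose_of_trivial] at h
  have hQisym : (Q⁻¹)ᵀ = Q⁻¹ := by
    rw [Matrix.transpose_nonsing_inv, hQsym]
  -- key factorization
  have key1 : S * (c • Q) = S + c • 1 := by
    rw [hQdef, Matrix.mul_smul, Matrix.mul_add, hSS, Matrix.mul_smul, Matrix.mul_one,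
      smul_add, smul_smul, mul_inv_cancel₀ hc.ne', one_smul, add_comm]
  have hScdet : (S + c • (1 : Matrix (Fin n) (Fin n) ℝ)).det = c ^ n * S.det * Q.det := by
    rw [← key1, Matrix.det_mul, Matrix.det_smul, Fintype.card_fin]
    ring
  have hScPD : (S + c • (1 : Matrix (Fin n) (Fin n) ℝ)).PosDef :=
    hS.add (smul_one_posDef hc)
  -- inverse identity
  have hRinv : (S + c • (1 : Matrix (Fin n) (Fin n) ℝ))⁻¹
      = c⁻¹ • 1 - (c⁻¹ * c⁻¹) • Q⁻¹ := by
    apply Matrix.inv_eq_right_inv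
    rw [← key1, Matrix.mul_sub]
    rw [Matrix.mul_assoc, Matrix.mul_assoc]
    rw [show (c • Q) * (c⁻¹ • (1 : Matrix (Fin n) (Fin n) ℝ)) = Q by
      rw [Matrix.smul_mul, Matrix.mul_smul, Matrix.mul_one, smul_smul,
        mul_inv_cancel₀ hc.ne', one_smul]]
    rw [show (c • Q) * ((c⁻¹ * c⁻¹) • Q⁻¹) = c⁻¹ • (1 : Matrix (Fin n) (Fin n) ℝ) by
      rw [Matrix.smul_mul, Matrix.mul_smul, hQQ, smul_smul]
      congr 1
      field_simp]
    rw [← Matrix.mul_sub, hQdef, add_sub_cancel_right, hSS]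
  set m : Fin n → ℝ := Q⁻¹ *ᵥ (c⁻¹ • w) with hmdef
  have hQm : Q *ᵥ m = c⁻¹ • w := by
    rw [hmdef, Matrix.mulVec_mulVec, hQQ, Matrix.one_mulVec]
  -- pointwise identity
  set K : ℝ := mvnPdf (S + c • (1 : Matrix (Fin n) (Fin n) ℝ)) w
      * (Real.sqrt ((2 * Real.pi) ^ n / Q.det))⁻¹ with hKdef
  have hpoint : ∀ z : Fin n → ℝ,
      mvnPdf S z * mvnPdf (c • (1 : Matrix (Fin n) (Fin n) ℝ)) (w - z)
        = K * Real.exp (-((z - m) ⬝ᵥ Q *ᵥ (z - m)) / 2) := by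
    intro z
    unfold mvnPdf
    rw [hKdef, smul_one_det, smul_one_inv hc.ne']
    unfold mvnPdf
    rw [hScdet, hRinv]
    -- rearrange into (const) * (exp), prove each part
    rw [show ∀ a b c' d' : ℝ, a * b * (c' * d') = (a * c') * (b * d') from fun a b c' d' => by ring]
    rw [show ∀ a b c' d' : ℝ, (a * b * c') * d' = (a * c') * (b * d') from fun a b c' d' => by ring]
    congr 1
    · -- constants
      rw [← Real.sqrt_inv, ← Real.sqrt_inv, ← Real.sqrt_inv, ← Real.sqrt_inv,
        ← Real.sqrt_mul (by positivity), ← Real.sqrt_mul (by positivity)]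
      congr 1
      have h2p : (0:ℝ) < (2 * Real.pi) ^ n := by positivity
      field_simp
    · -- exponentials
      rw [← Real.exp_add, ← Real.exp_add]
      congr 1
      have expand : (z - m) ⬝ᵥ Q *ᵥ (z - m)
          = z ⬝ᵥ Q *ᵥ z - 2 * (c⁻¹ * (w ⬝ᵥ z)) + c⁻¹ * c⁻¹ * (w ⬝ᵥ Q⁻¹ *ᵥ w) := by
        rw [Matrix.mulVec_sub, dotProduct_sub, sub_dotProduct,
          sub_dotProduct, hQm]
        have h1 : z ⬝ᵥ c⁻¹ • w = c⁻¹ * (w ⬝ᵥ z) := by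
          rw [dotProduct_smul, smul_eq_mul, dotProduct_comm]
        have h2 : m ⬝ᵥ Q *ᵥ z = c⁻¹ * (w ⬝ᵥ z) := by
          rw [dot_sym hQsym, hQm, h1]
        have h3 : m ⬝ᵥ c⁻¹ • w = c⁻¹ * c⁻¹ * (w ⬝ᵥ Q⁻¹ *ᵥ w) := by
          rw [dotProduct_smul, hmdef, Matrix.mulVec_smul,
            smul_dotProduct, smul_eq_mul, smul_eq_mul]
          rw [dotProduct_comm]
          ring
        rw [h1, h2, h3]
        ring
      have hzQ : z ⬝ᵥ Q *ᵥ z = z ⬝ᵥ S⁻¹ *ᵥ z + c⁻¹ * (z ⬝ᵥ z) := by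
        rw [hQdef, Matrix.add_mulVec, dotProduct_add, Matrix.smul_mulVec,
          Matrix.one_mulVec, dotProduct_smul, smul_eq_mul]
      have hwR : w ⬝ᵥ (c⁻¹ • 1 - (c⁻¹ * c⁻¹) • Q⁻¹) *ᵥ w
          = c⁻¹ * (w ⬝ᵥ w) - c⁻¹ * c⁻¹ * (w ⬝ᵥ Q⁻¹ *ᵥ w) := by
        rw [Matrix.sub_mulVec, dotProduct_sub, Matrix.smul_mulVec,
          Matrix.one_mulVec, dotProduct_smul, smul_eq_mul,
          Matrix.smul_mulVec, dotProduct_smul, smul_eq_mul]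
      have hwz : (w - z) ⬝ᵥ (c⁻¹ • (1 : Matrix (Fin n) (Fin n) ℝ)) *ᵥ (w - z)
          = c⁻¹ * (w ⬝ᵥ w) - 2 * (c⁻¹ * (w ⬝ᵥ z)) + c⁻¹ * (z ⬝ᵥ z) := by
        rw [Matrix.smul_mulVec, Matrix.one_mulVec, dotProduct_smul, smul_eq_mul,
          dotProduct_sub, sub_dotProduct, sub_dotProduct]
        rw [dotProduct_comm z w]
        ring
      rw [expand, hzQ, hwR, hwz]
      ring
  have hsqrt_pos : 0 < Real.sqrt ((2 * Real.pi) ^ n / Q.det) :=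
    Real.sqrt_pos.mpr (by positivity)
  calc (∫ z : Fin n → ℝ, mvnPdf S z * mvnPdf (c • (1 : Matrix (Fin n) (Fin n) ℝ)) (w - z))
      = ∫ z : Fin n → ℝ, K * Real.exp (-((z - m) ⬝ᵥ Q *ᵥ (z - m)) / 2) := by
        simp_rw [hpoint]
    _ = K * ∫ z : Fin n → ℝ, Real.exp (-((z - m) ⬝ᵥ Q *ᵥ (z - m)) / 2) :=
        MeasureTheory.integral_const_mul _ _
    _ = K * Real.sqrt ((2 * Real.pi) ^ n / Q.det) := by
        rw [MeasureTheory.integral_sub_right_eq_self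
          (fun x : Fin n → ℝ => Real.exp (-(x ⬝ᵥ Q *ᵥ x) / 2)) m, gauss_integral hQ]
    _ = mvnPdf (S + c • (1 : Matrix (Fin n) (Fin n) ℝ)) w := by
        rw [hKdef, mul_assoc, inv_mul_cancel₀ hsqrt_pos.ne', mul_one]

lemma prod_prod_gpdf {ι κ : Type*} [Fintype ι] [Fintype κ] (c : ℝ) (f : ι → κ → ℝ) :
    ∏ i, ∏ j, gpdf c (f i j)
      = ((Real.sqrt (2 * Real.pi * c))⁻¹) ^ (Fintype.card ι * Fintype.card κ)
        * Real.exp (-(∑ i, ∑ j, f i j ^ 2) / (2 * c)) := by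
  unfold gpdf
  simp_rw [Finset.prod_mul_distrib, Finset.prod_const, ← Real.exp_sum, Finset.card_univ]
  rw [← pow_mul, mul_comm (Fintype.card κ)]
  congr 1
  simp only [neg_div, Finset.sum_div, Finset.sum_neg_distrib]

lemma sum_sq_eq_trace {a b : ℕ} (N : Matrix (Fin a) (Fin b) ℝ) :
    ∑ i, ∑ j, N i j ^ 2 = (Nᵀ * N).trace := by
  rw [Matrix.trace]
  rw [Finset.sum_comm]
  refine Finset.sum_congr rfl fun j _ => ?_
  rw [Matrix.diag_apply, Matrix.mul_apply]
  exact Finset.sum_congr rfl fun i _ => by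
    rw [Matrix.transpose_apply, sq]

lemma frob_split {n₁ d k n₂ : ℕ} (A : Matrix (Fin n₁) (Fin d) ℝ)
    (Ac : Matrix (Fin n₁) (Fin k) ℝ) (hcomplete : A * Aᵀ + Ac * Acᵀ = 1)
    (M : Matrix (Fin n₁) (Fin n₂) ℝ) :
    ∑ i, ∑ j, M i j ^ 2
      = (∑ l, ∑ j, (Aᵀ * M) l j ^ 2) + ∑ l, ∑ j, (Acᵀ * M) l j ^ 2 := by
  rw [sum_sq_eq_trace, sum_sq_eq_trace, sum_sq_eq_trace]
  rw [Matrix.transpose_mul, Matrix.transpose_mul, Matrix.transpose_transpose,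
    Matrix.transpose_transpose]
  have : Mᵀ * M = Mᵀ * (A * Aᵀ + Ac * Acᵀ) * M := by rw [hcomplete, Matrix.mul_one]
  rw [this, Matrix.mul_add, Matrix.add_mul, Matrix.trace_add]
  congr 1 <;> simp only [Matrix.mul_assoc]

set_option maxHeartbeats 1000000 in
/-- Orthogonal projection marginal likelihood factorization. Under
Y = A Z + E with AᵀA = I_d and A_c completing A to an orthonormal basis of ℝ^{n₁},
the marginal density of Y (after integrating out Z) is
∏_{l=1}^{d} N(Yᵀa_l; 0, Σ_l + σ₀²I) ∏_{l=1}^{n₁-d} N(Yᵀa_{c,l}; 0, σ₀²I). -/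
theorem gppca_marginal_likelihood_factorization
    (n₁ d n₂ : ℕ) (hd1 : 1 ≤ d) (hdn : d ≤ n₁) (hn2 : 1 ≤ n₂)
    (A : Matrix (Fin n₁) (Fin d) ℝ) (hA : Aᵀ * A = 1)
    (Ac : Matrix (Fin n₁) (Fin (n₁ - d)) ℝ) (hAc : Acᵀ * Ac = 1)
    (hAAc : Aᵀ * Ac = 0) (hcomplete : A * Aᵀ + Ac * Acᵀ = 1)
    (S : Fin d → Matrix (Fin n₂) (Fin n₂) ℝ) (hS : ∀ l, (S l).PosDef)
    (σ02 : ℝ) (hσ02 : 0 < σ02) :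
    ∀ Y : Matrix (Fin n₁) (Fin n₂) ℝ,
      (∫ Z' : Fin d → Fin n₂ → ℝ, jointPdfLMC A S σ02 (Matrix.of Z') Y) =
        (∏ l : Fin d,
          mvnPdf (S l + σ02 • (1 : Matrix (Fin n₂) (Fin n₂) ℝ)) (Yᵀ *ᵥ fun i => A i l)) *
        ∏ l : Fin (n₁ - d),
          mvnPdf (σ02 • (1 : Matrix (Fin n₂) (Fin n₂) ℝ)) (Yᵀ *ᵥ fun i => Ac i l) := by
  intro Y
  have hAcA : Acᵀ * A = 0 := by
    have h := congrArg Matrix.transpose hAAc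
    rwa [Matrix.transpose_mul, Matrix.transpose_transpose, Matrix.transpose_zero] at h
  set W : Matrix (Fin d) (Fin n₂) ℝ := Aᵀ * Y with hW
  set V : Matrix (Fin (n₁ - d)) (Fin n₂) ℝ := Acᵀ * Y with hV
  have hWl : ∀ l, W l = Yᵀ *ᵥ (fun i => A i l) := by
    intro l; funext j
    simp [hW, Matrix.mul_apply, Matrix.mulVec, dotProduct, Matrix.transpose_apply,
      mul_comm]
  have hVl : ∀ l, V l = Yᵀ *ᵥ (fun i => Ac i l) := by
    intro l; funext j
    simp [hV, Matrix.mul_apply, Matrix.mulVec, dotProduct, Matrix.transpose_apply,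
      mul_comm]
  have step0 : ∀ Z' : Fin d → Fin n₂ → ℝ,
      jointPdfLMC A S σ02 (Matrix.of Z') Y
        = (∏ l, (mvnPdf (S l) (Z' l)
            * mvnPdf (σ02 • (1 : Matrix (Fin n₂) (Fin n₂) ℝ)) (W l - Z' l)))
          * ∏ l, mvnPdf (σ02 • (1 : Matrix (Fin n₂) (Fin n₂) ℝ)) (V l) := by
    intro Z'
    unfold jointPdfLMC
    set M : Matrix (Fin n₁) (Fin n₂) ℝ := Y - A * Matrix.of Z' with hM
    have hAM : Aᵀ * M = W - Matrix.of Z' := by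
      rw [hM, Matrix.mul_sub, ← Matrix.mul_assoc, hA, Matrix.one_mul]
    have hAcM : Acᵀ * M = V := by
      rw [hM, Matrix.mul_sub, ← Matrix.mul_assoc, hAcA, Matrix.zero_mul, sub_zero]
    have hnoise : (∏ i, ∏ j, gpdf σ02 (M i j))
        = (∏ l, ∏ j, gpdf σ02 ((W - Matrix.of Z') l j))
          * ∏ l, ∏ j, gpdf σ02 (V l j) := by
      rw [prod_prod_gpdf σ02 M, prod_prod_gpdf σ02 (W - Matrix.of Z'), prod_prod_gpdf σ02 V]
      simp only [Fintype.card_fin]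
      have hcard : n₁ * n₂ = d * n₂ + (n₁ - d) * n₂ := by
        have h' : d + (n₁ - d) = n₁ := Nat.add_sub_cancel' hdn
        calc n₁ * n₂ = (d + (n₁ - d)) * n₂ := by rw [h']
          _ = d * n₂ + (n₁ - d) * n₂ := add_mul _ _ _
      have hsum := frob_split A Ac hcomplete M
      rw [hAM, hAcM] at hsum
      rw [hsum, hcard, pow_add, neg_add, add_div, Real.exp_add]
      ring
    rw [hnoise, Finset.prod_mul_distrib, ← mul_assoc]
    congr 1
    · congr 1
      refine Finset.prod_congr rfl fun l _ => ?_
      rw [mvnPdf_smul_one hσ02]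
      refine Finset.prod_congr rfl fun j _ => ?_
      simp [Matrix.sub_apply]
    · exact Finset.prod_congr rfl fun l _ => (mvnPdf_smul_one hσ02 (V l)).symm
  calc (∫ Z' : Fin d → Fin n₂ → ℝ, jointPdfLMC A S σ02 (Matrix.of Z') Y)
      = ∫ Z' : Fin d → Fin n₂ → ℝ,
          (∏ l, (mvnPdf (S l) (Z' l)
            * mvnPdf (σ02 • (1 : Matrix (Fin n₂) (Fin n₂) ℝ)) (W l - Z' l)))
          * ∏ l, mvnPdf (σ02 • (1 : Matrix (Fin n₂) (Fin n₂) ℝ)) (V l) :=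
        integral_congr_ae (Filter.Eventually.of_forall step0)
    _ = (∏ l : Fin d,
          mvnPdf (S l + σ02 • (1 : Matrix (Fin n₂) (Fin n₂) ℝ)) (Yᵀ *ᵥ fun i => A i l)) *
        ∏ l : Fin (n₁ - d),
          mvnPdf (σ02 • (1 : Matrix (Fin n₂) (Fin n₂) ℝ)) (Yᵀ *ᵥ fun i => Ac i l) := by
      rw [MeasureTheory.integral_mul_const]
      rw [MeasureTheory.integral_fintype_prod_volume_eq_prod (ι := Fin d)
        (fun l z => mvnPdf (S l) z
          * mvnPdf (σ02 • (1 : Matrix (Fin n₂) (Fin n₂) ℝ)) (W l - z))]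
      congr 1
      · refine Finset.prod_congr rfl fun l _ => ?_
        rw [conv_lemma (hS l) hσ02 (W l), hWl l]
      · exact Finset.prod_congr rfl fun l _ => by rw [hVl l]
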